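/- arXiv:2107.03836 — 2 statements merged into one kernel-verified Lean document; each statement's English description precedes it below -/
import Mathlib

section
/- Let μ be a Borel probability measure on ℝ², let k, ℓ ≥ 2 and m ≥ 1 be integers, let Γ be an equipartition of μ into k·m rows and ℓ·m columns, and let D_n be the empirical measure of n iid points drawn from μ. Then with probability at least 1 − ℓ·m·exp(−n/(3ℓm)) − k·m·exp(−n/(3km)), the following holds simultaneously for every k×ℓ grid G: the Γ-boundary mass of D_n with respect to G is at most 4/m. -/
open MeasureTheory Finset ProbabilityTheory

noncomputable section

/-- A grid with `r` rows and `c` columns on ℝ², given by `r - 1` strictly increasing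
row cut points and `c - 1` strictly increasing column cut points. -/
structure Grid (r c : ℕ) where
  rowCuts : Fin (r - 1) → ℝ
  colCuts : Fin (c - 1) → ℝ
  rowCuts_mono : StrictMono rowCuts
  colCuts_mono : StrictMono colCuts

/-- Interval number `i` of the partition of ℝ induced by the cut points `cuts`:
`[cuts (i-1), cuts i)`, with the first interval unbounded below and the last
unbounded above. -/
def cutInterval {m : ℕ} (cuts : Fin (m - 1) → ℝ) (i : Fin m) : Set ℝ :=
  {t | (∀ j : Fin (m - 1), (j : ℕ) < (i : ℕ) → cuts j ≤ t) ∧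
       (∀ j : Fin (m - 1), (i : ℕ) ≤ (j : ℕ) → t < cuts j)}

/-- Cell `(i, j)` (row `i`, column `j`) of a grid, as a subset of ℝ². -/
def Grid.cell {r c : ℕ} (G : Grid r c) (i : Fin r) (j : Fin c) : Set (ℝ × ℝ) :=
  {p | p.1 ∈ cutInterval G.colCuts j ∧ p.2 ∈ cutInterval G.rowCuts i}

/-- The probability mass function on `{1,…,r} × {1,…,c}` induced by a measure `ν`
on a grid `G`: it assigns to `(i, j)` the `ν`-measure of cell `(i, j)`. -/
def gridPMF {r c : ℕ} (ν : Measure (ℝ × ℝ)) (G : Grid r c) (i : Fin r) (j : Fin c) : ℝ :=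
  (ν (G.cell i j)).toReal

open Classical in
/-- The empirical measure of the sample `ω`, as a real-valued set function. -/
def empMeas {n : ℕ} (ω : Fin n → ℝ × ℝ) (S : Set (ℝ × ℝ)) : ℝ :=
  ((Finset.univ.filter (fun i => ω i ∈ S)).card : ℝ) / n

/-- The pmf on cells induced by the empirical measure of the sample `ω`. -/
def empGridPMF {n r c : ℕ} (ω : Fin n → ℝ × ℝ) (G : Grid r c) (i : Fin r) (j : Fin c) : ℝ :=
  empMeas ω (G.cell i j)

/-- Mutual information (base 2) of a pmf `p` on `Fin r × Fin c`, with the convention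
that terms with `p i j = 0` vanish. -/
def MI {r c : ℕ} (p : Fin r → Fin c → ℝ) : ℝ :=
  ∑ i, ∑ j, if p i j = 0 then 0
    else p i j * Real.logb 2 (p i j / ((∑ j', p i j') * (∑ i', p i' j)))


/-- A cell `(i, j)` of the grid `Γ` is `G`-split if it is not contained within a
single cell of `G`. -/
def IsSplit {R S k l : ℕ} (Γ : Grid R S) (G : Grid k l) (i : Fin R) (j : Fin S) : Prop :=
  ¬ ∃ (i' : Fin k) (j' : Fin l), Γ.cell i j ⊆ G.cell i' j'

open Classical in
/-- The `Γ`-boundary mass of a (real-valued set function standing for a) measure `f`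
with respect to `G`: the total `f`-mass of the `G`-split cells of `Γ`. -/
def boundaryMass {R S k l : ℕ} (f : Set (ℝ × ℝ) → ℝ) (Γ : Grid R S) (G : Grid k l) : ℝ :=
  ∑ i, ∑ j, if IsSplit Γ G i j then f (Γ.cell i j) else 0

/-- `Γ` is an equipartition of `μ` into `R` rows and `S` columns if every row of
`μ|_Γ` has total mass `1/R` and every column has total mass `1/S`. -/
def IsEquipartition (μ : Measure (ℝ × ℝ)) {R S : ℕ} (Γ : Grid R S) : Prop :=
  (∀ i, ∑ j, gridPMF μ Γ i j = 1 / (R : ℝ)) ∧ (∀ j, ∑ i, gridPMF μ Γ i j = 1 / (S : ℝ))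

section CutLemmas
variable {N : ℕ} {cuts : Fin (N - 1) → ℝ}

lemma cutInterval_disjoint {i i' : Fin N} (h : i ≠ i') :
    Disjoint (cutInterval cuts i) (cutInterval cuts i') := by
  have main : ∀ {a b : Fin N}, (a : ℕ) < (b : ℕ) →
      Disjoint (cutInterval cuts a) (cutInterval cuts b) := by
    intro a b hab
    rw [Set.disjoint_left]
    rintro t ⟨h1, h2⟩ ⟨h1', h2'⟩
    have hj : (a : ℕ) < N - 1 := by have := b.isLt; omega
    have c1 := h2 ⟨a, hj⟩ le_rfl
    have c2 := h1' ⟨a, hj⟩ hab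
    linarith
  rcases lt_or_gt_of_ne (fun he => h (Fin.ext he) : (i : ℕ) ≠ (i' : ℕ)) with hlt | hgt
  · exact main hlt
  · exact (main hgt).symm

lemma exists_mem_cutInterval (hN : 0 < N) (hm : Monotone cuts) (t : ℝ) :
    ∃ i : Fin N, t ∈ cutInterval cuts i := by
  classical
  set B := Finset.univ.filter (fun j : Fin (N - 1) => cuts j ≤ t) with hB_def
  by_cases hB : B.Nonempty
  · set jm := B.max' hB with hjm_def
    have hjm : cuts jm ≤ t := (Finset.mem_filter.mp (B.max'_mem hB)).2
    have hlt : (jm : ℕ) + 1 < N := by have := jm.isLt; omega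
    refine ⟨⟨(jm : ℕ) + 1, hlt⟩, ?_, ?_⟩
    · intro j hj
      simp only [Fin.val_mk] at hj
      exact le_trans (hm (by rw [Fin.le_def]; omega)) hjm
    · intro j hj
      simp only [Fin.val_mk] at hj
      by_contra hle
      push_neg at hle
      have hmem : j ∈ B := Finset.mem_filter.mpr ⟨Finset.mem_univ _, hle⟩
      have := B.le_max' j hmem
      rw [Fin.le_def] at this
      omega
  · refine ⟨⟨0, hN⟩, ?_, ?_⟩
    · intro j hj; simp at hj
    · intro j _
      by_contra hle
      push_neg at hle
      exact hB ⟨j, Finset.mem_filter.mpr ⟨Finset.mem_univ _, hle⟩⟩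

lemma cutInterval_nonempty (hm : StrictMono cuts) (i : Fin N) :
    (cutInterval cuts i).Nonempty := by
  rcases Nat.eq_zero_or_pos (N - 1) with h0 | hpos
  · exact ⟨0, fun j _ => absurd j.isLt (by omega), fun j _ => absurd j.isLt (by omega)⟩
  · by_cases hi : (i : ℕ) = 0
    · refine ⟨cuts ⟨0, hpos⟩ - 1, fun j hj => by omega, fun j _ => ?_⟩
      have : cuts ⟨0, hpos⟩ ≤ cuts j := hm.monotone (by simp [Fin.le_def])
      linarith
    · have hlt : (i : ℕ) - 1 < N - 1 := by have := i.isLt; omega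
      refine ⟨cuts ⟨(i : ℕ) - 1, hlt⟩, fun j hj => hm.monotone (by simp [Fin.le_def]; omega),
        fun j hj => hm (by simp [Fin.lt_def]; omega)⟩

lemma cutInterval_mem_of_between {i : Fin N} {a b x : ℝ}
    (ha : a ∈ cutInterval cuts i) (hb : b ∈ cutInterval cuts i) (h1 : a ≤ x) (h2 : x ≤ b) :
    x ∈ cutInterval cuts i :=
  ⟨fun j hj => (ha.1 j hj).trans h1, fun j hj => lt_of_le_of_lt h2 (hb.2 j hj)⟩

lemma subset_cutInterval_of_no_cut {k : ℕ} (hk : 0 < k) (Gcuts : Fin (k - 1) → ℝ)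
    (hG : Monotone Gcuts) {i : Fin N} (hne : (cutInterval cuts i).Nonempty)
    (hnocut : ∀ c : Fin (k - 1), Gcuts c ∉ cutInterval cuts i) :
    ∃ i' : Fin k, cutInterval cuts i ⊆ cutInterval Gcuts i' := by
  obtain ⟨t0, ht0⟩ := hne
  obtain ⟨i', hi'⟩ := exists_mem_cutInterval hk hG t0
  refine ⟨i', fun t ht => ⟨?_, ?_⟩⟩
  · intro j hj
    by_contra h
    push_neg at h
    exact hnocut j (cutInterval_mem_of_between ht ht0 h.le (hi'.1 j hj))
  · intro j hj
    by_contra h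
    push_neg at h
    exact hnocut j (cutInterval_mem_of_between ht0 ht (hi'.2 j hj).le h)

open Classical in
lemma card_bad_le {k : ℕ} (hk : 0 < k) (hΓ : StrictMono cuts)
    (Gcuts : Fin (k - 1) → ℝ) (hG : StrictMono Gcuts) :
    (Finset.univ.filter
      (fun i : Fin N => ¬∃ i' : Fin k, cutInterval cuts i ⊆ cutInterval Gcuts i')).card
      ≤ k - 1 := by
  classical
  rcases Nat.eq_zero_or_pos (k - 1) with h0 | hpos
  · have : ∀ i : Fin N, ∃ i' : Fin k, cutInterval cuts i ⊆ cutInterval Gcuts i' := by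
      intro i
      exact ⟨⟨0, hk⟩, fun t _ => ⟨fun j _ => absurd j.isLt (by omega),
        fun j _ => absurd j.isLt (by omega)⟩⟩
    rw [Finset.filter_eq_empty_iff.mpr (fun i _ => not_not_intro (this i))]
    simp
  · set bad := Finset.univ.filter
      (fun i : Fin N => ¬∃ i' : Fin k, cutInterval cuts i ⊆ cutInterval Gcuts i') with hbad
    have key : ∀ i ∈ bad, ∃ c : Fin (k - 1), Gcuts c ∈ cutInterval cuts i := by
      intro i hi
      by_contra h
      push_neg at h
      exact (Finset.mem_filter.mp hi).2
        (subset_cutInterval_of_no_cut hk Gcuts hG.monotone (cutInterval_nonempty hΓ i) h)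
    choose f hf using fun i (hi : i ∈ bad) => key i hi
    have hinj : Set.InjOn (fun i => if h : i ∈ bad then f i h else ⟨0, hpos⟩) bad := by
      intro i1 h1 i2 h2 heq
      simp only [Finset.mem_coe] at h1 h2
      simp only [dif_pos h1, dif_pos h2] at heq
      by_contra hne
      have d := cutInterval_disjoint (cuts := cuts) hne
      rw [Set.disjoint_left] at d
      exact d (hf i1 h1) (heq ▸ hf i2 h2)
    calc bad.card ≤ (Finset.univ : Finset (Fin (k - 1))).card :=
          Finset.card_le_card_of_injOn _ (fun _ _ => Finset.mem_univ _) hinj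
      _ = k - 1 := by simp
end CutLemmas

def rowRegion {r c : ℕ} (G : Grid r c) (i : Fin r) : Set (ℝ × ℝ) :=
  {p | p.2 ∈ cutInterval G.rowCuts i}

def colRegion {r c : ℕ} (G : Grid r c) (j : Fin c) : Set (ℝ × ℝ) :=
  {p | p.1 ∈ cutInterval G.colCuts j}

lemma empMeas_nonneg {n : ℕ} (ω : Fin n → ℝ × ℝ) (S : Set (ℝ × ℝ)) : 0 ≤ empMeas ω S :=
  div_nonneg (by positivity) (by positivity)

open Classical in
lemma sum_empMeas_row_le {r c n : ℕ} (Γ : Grid r c) (ω : Fin n → ℝ × ℝ) (i : Fin r) :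
    ∑ j, empMeas ω (Γ.cell i j) ≤ empMeas ω (rowRegion Γ i) := by
  unfold empMeas
  rw [← Finset.sum_div]
  have hcard : ∑ j : Fin c, ((Finset.univ.filter (fun s => ω s ∈ Γ.cell i j)).card : ℝ) ≤
      ((Finset.univ.filter (fun s => ω s ∈ rowRegion Γ i)).card : ℝ) := by
    have hdis : ∀ j ∈ (Finset.univ : Finset (Fin c)), ∀ j' ∈ (Finset.univ : Finset (Fin c)),
        j ≠ j' → Disjoint (Finset.univ.filter (fun s => ω s ∈ Γ.cell i j))
          (Finset.univ.filter (fun s => ω s ∈ Γ.cell i j')) := by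
      intro j _ j' _ hne
      rw [Finset.disjoint_left]
      intro s hs hs'
      have h1 := (Finset.mem_filter.mp hs).2.1
      have h2 := (Finset.mem_filter.mp hs').2.1
      exact (Set.disjoint_left.mp (cutInterval_disjoint hne)) h1 h2
    rw [← Nat.cast_sum]
    rw [← Finset.card_biUnion hdis]
    have hsub : (Finset.univ.biUnion fun j => Finset.univ.filter (fun s => ω s ∈ Γ.cell i j)) ⊆
        Finset.univ.filter (fun s => ω s ∈ rowRegion Γ i) := by
      intro s hs
      rw [Finset.mem_biUnion] at hs
      obtain ⟨j, _, hj⟩ := hs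
      exact Finset.mem_filter.mpr ⟨Finset.mem_univ _, (Finset.mem_filter.mp hj).2.2⟩
    exact_mod_cast Finset.card_le_card hsub
  rw [div_eq_mul_inv, div_eq_mul_inv]
  exact mul_le_mul_of_nonneg_right hcard (by positivity)

open Classical in
lemma sum_empMeas_col_le {r c n : ℕ} (Γ : Grid r c) (ω : Fin n → ℝ × ℝ) (j : Fin c) :
    ∑ i, empMeas ω (Γ.cell i j) ≤ empMeas ω (colRegion Γ j) := by
  unfold empMeas
  rw [← Finset.sum_div]
  have hcard : ∑ i : Fin r, ((Finset.univ.filter (fun s => ω s ∈ Γ.cell i j)).card : ℝ) ≤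
      ((Finset.univ.filter (fun s => ω s ∈ colRegion Γ j)).card : ℝ) := by
    have hdis : ∀ i ∈ (Finset.univ : Finset (Fin r)), ∀ i' ∈ (Finset.univ : Finset (Fin r)),
        i ≠ i' → Disjoint (Finset.univ.filter (fun s => ω s ∈ Γ.cell i j))
          (Finset.univ.filter (fun s => ω s ∈ Γ.cell i' j)) := by
      intro i _ i' _ hne
      rw [Finset.disjoint_left]
      intro s hs hs'
      have h1 := (Finset.mem_filter.mp hs).2.2
      have h2 := (Finset.mem_filter.mp hs').2.2
      exact (Set.disjoint_left.mp (cutInterval_disjoint hne)) h1 h2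
    rw [← Nat.cast_sum]
    rw [← Finset.card_biUnion hdis]
    have hsub : (Finset.univ.biUnion fun i => Finset.univ.filter (fun s => ω s ∈ Γ.cell i j)) ⊆
        Finset.univ.filter (fun s => ω s ∈ colRegion Γ j) := by
      intro s hs
      rw [Finset.mem_biUnion] at hs
      obtain ⟨i, _, hi⟩ := hs
      exact Finset.mem_filter.mpr ⟨Finset.mem_univ _, (Finset.mem_filter.mp hi).2.1⟩
    exact_mod_cast Finset.card_le_card hsub
  rw [div_eq_mul_inv, div_eq_mul_inv]
  exact mul_le_mul_of_nonneg_right hcard (by positivity)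

open Classical in
lemma boundary_bound {k l m n : ℕ} (hk : 2 ≤ k) (hl : 2 ≤ l) (hm : 1 ≤ m)
    (Γ : Grid (k * m) (l * m)) (ω : Fin n → ℝ × ℝ)
    (hrow : ∀ i, empMeas ω (rowRegion Γ i) ≤ 2 / ((k : ℝ) * m))
    (hcol : ∀ j, empMeas ω (colRegion Γ j) ≤ 2 / ((l : ℝ) * m))
    (G : Grid k l) : boundaryMass (empMeas ω) Γ G ≤ 4 / (m : ℝ) := by
  set RB := Finset.univ.filter
    (fun i : Fin (k * m) => ¬∃ i' : Fin k, cutInterval Γ.rowCuts i ⊆ cutInterval G.rowCuts i')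
    with hRB
  set CB := Finset.univ.filter
    (fun j : Fin (l * m) => ¬∃ j' : Fin l, cutInterval Γ.colCuts j ⊆ cutInterval G.colCuts j')
    with hCB
  have hsplit : ∀ i j, IsSplit Γ G i j → i ∈ RB ∨ j ∈ CB := by
    intro i j hs
    by_contra hcon
    push_neg at hcon
    obtain ⟨h1, h2⟩ := hcon
    rw [hRB, Finset.mem_filter, not_and, not_not] at h1
    rw [hCB, Finset.mem_filter, not_and, not_not] at h2
    obtain ⟨i', hi'⟩ := h1 (Finset.mem_univ _)
    obtain ⟨j', hj'⟩ := h2 (Finset.mem_univ _)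
    exact hs ⟨i', j', fun p hp => ⟨hj' hp.1, hi' hp.2⟩⟩
  have step1 : boundaryMass (empMeas ω) Γ G ≤
      (∑ i ∈ RB, ∑ j, empMeas ω (Γ.cell i j)) + (∑ j ∈ CB, ∑ i, empMeas ω (Γ.cell i j)) := by
    unfold boundaryMass
    have hle : ∀ i j, (if IsSplit Γ G i j then empMeas ω (Γ.cell i j) else 0) ≤
        (if i ∈ RB then empMeas ω (Γ.cell i j) else 0) +
        (if j ∈ CB then empMeas ω (Γ.cell i j) else 0) := by
      intro i j
      by_cases hs : IsSplit Γ G i j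
      · rw [if_pos hs]
        rcases hsplit i j hs with h | h
        · rw [if_pos h]
          have : (0:ℝ) ≤ if j ∈ CB then empMeas ω (Γ.cell i j) else 0 := by
            split <;> simp [empMeas_nonneg]
          linarith
        · rw [if_pos h]
          have : (0:ℝ) ≤ if i ∈ RB then empMeas ω (Γ.cell i j) else 0 := by
            split <;> simp [empMeas_nonneg]
          linarith
      · rw [if_neg hs]
        have h1 : (0:ℝ) ≤ if i ∈ RB then empMeas ω (Γ.cell i j) else 0 := by
          split <;> simp [empMeas_nonneg]
        have h2 : (0:ℝ) ≤ if j ∈ CB then empMeas ω (Γ.cell i j) else 0 := by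
          split <;> simp [empMeas_nonneg]
        linarith
    calc ∑ i, ∑ j, (if IsSplit Γ G i j then empMeas ω (Γ.cell i j) else 0)
        ≤ ∑ i, ∑ j, ((if i ∈ RB then empMeas ω (Γ.cell i j) else 0) +
          (if j ∈ CB then empMeas ω (Γ.cell i j) else 0)) := by
          apply Finset.sum_le_sum; intro i _; apply Finset.sum_le_sum; intro j _; exact hle i j
      _ = (∑ i, ∑ j, if i ∈ RB then empMeas ω (Γ.cell i j) else 0) +
          (∑ i, ∑ j, if j ∈ CB then empMeas ω (Γ.cell i j) else 0) := by
          rw [← Finset.sum_add_distrib]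
          congr 1
          ext i
          rw [← Finset.sum_add_distrib]
      _ = (∑ i ∈ RB, ∑ j, empMeas ω (Γ.cell i j)) + (∑ j ∈ CB, ∑ i, empMeas ω (Γ.cell i j)) := by
          congr 1
          · have h1 : ∀ i : Fin (k * m),
                (∑ j : Fin (l * m), if i ∈ RB then empMeas ω (Γ.cell i j) else 0) =
                if i ∈ RB then ∑ j, empMeas ω (Γ.cell i j) else 0 := by
              intro i; split <;> simp
            simp_rw [h1]
            rw [Finset.sum_ite_mem, Finset.univ_inter]
          · rw [Finset.sum_comm]
            have h1 : ∀ j : Fin (l * m),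
                (∑ i : Fin (k * m), if j ∈ CB then empMeas ω (Γ.cell i j) else 0) =
                if j ∈ CB then ∑ i, empMeas ω (Γ.cell i j) else 0 := by
              intro j; split <;> simp
            simp_rw [h1]
            rw [Finset.sum_ite_mem, Finset.univ_inter]
  have hcardRB : RB.card ≤ k - 1 := by
    rw [hRB]
    exact card_bad_le (by omega) Γ.rowCuts_mono G.rowCuts G.rowCuts_mono
  have hcardCB : CB.card ≤ l - 1 := by
    rw [hCB]
    exact card_bad_le (by omega) Γ.colCuts_mono G.colCuts G.colCuts_mono
  have hRBcard : (RB.card : ℝ) ≤ (k : ℝ) - 1 := by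
    calc (RB.card : ℝ) ≤ ((k - 1 : ℕ) : ℝ) := by exact_mod_cast hcardRB
      _ = (k : ℝ) - 1 := by rw [Nat.cast_sub (by omega)]; norm_num
  have hCBcard : (CB.card : ℝ) ≤ (l : ℝ) - 1 := by
    calc (CB.card : ℝ) ≤ ((l - 1 : ℕ) : ℝ) := by exact_mod_cast hcardCB
      _ = (l : ℝ) - 1 := by rw [Nat.cast_sub (by omega)]; norm_num
  have hm0 : (0:ℝ) < m := Nat.cast_pos.mpr (by omega)
  have hk0 : (0:ℝ) < k := Nat.cast_pos.mpr (by omega)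
  have hl0 : (0:ℝ) < l := Nat.cast_pos.mpr (by omega)
  have h1 : ∑ i ∈ RB, ∑ j, empMeas ω (Γ.cell i j) ≤ ((k:ℝ) - 1) * (2 / ((k:ℝ) * m)) := by
    calc ∑ i ∈ RB, ∑ j, empMeas ω (Γ.cell i j) ≤ ∑ _i ∈ RB, (2 / ((k:ℝ) * m)) :=
        Finset.sum_le_sum (fun i _ => le_trans (sum_empMeas_row_le Γ ω i) (hrow i))
      _ = RB.card * (2 / ((k:ℝ) * m)) := by rw [Finset.sum_const, nsmul_eq_mul]
      _ ≤ ((k:ℝ) - 1) * (2 / ((k:ℝ) * m)) :=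
        mul_le_mul_of_nonneg_right hRBcard (by positivity)
  have h2 : ∑ j ∈ CB, ∑ i, empMeas ω (Γ.cell i j) ≤ ((l:ℝ) - 1) * (2 / ((l:ℝ) * m)) := by
    calc ∑ j ∈ CB, ∑ i, empMeas ω (Γ.cell i j) ≤ ∑ _j ∈ CB, (2 / ((l:ℝ) * m)) :=
        Finset.sum_le_sum (fun j _ => le_trans (sum_empMeas_col_le Γ ω j) (hcol j))
      _ = CB.card * (2 / ((l:ℝ) * m)) := by rw [Finset.sum_const, nsmul_eq_mul]
      _ ≤ ((l:ℝ) - 1) * (2 / ((l:ℝ) * m)) :=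
        mul_le_mul_of_nonneg_right hCBcard (by positivity)
  calc boundaryMass (empMeas ω) Γ G
      ≤ (∑ i ∈ RB, ∑ j, empMeas ω (Γ.cell i j)) + (∑ j ∈ CB, ∑ i, empMeas ω (Γ.cell i j)) := step1
    _ ≤ ((k:ℝ) - 1) * (2 / ((k:ℝ) * m)) + ((l:ℝ) - 1) * (2 / ((l:ℝ) * m)) := add_le_add h1 h2
    _ ≤ (k:ℝ) * (2 / ((k:ℝ) * m)) + (l:ℝ) * (2 / ((l:ℝ) * m)) := by
        gcongr <;> first | positivity | linarith
    _ = 4 / m := by field_simp; ring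

lemma pi_eval_measure {μ : Measure (ℝ × ℝ)} [IsProbabilityMeasure μ] {n : ℕ} (i : Fin n)
    {s : Set (ℝ × ℝ)} (hs : MeasurableSet s) :
    (Measure.pi fun _ : Fin n => μ) ((fun ω => ω i) ⁻¹' s) = μ s := by
  classical
  have h : ((fun ω : Fin n → ℝ × ℝ => ω i) ⁻¹' s) =
      Set.pi Set.univ (Function.update (fun _ : Fin n => (Set.univ : Set (ℝ × ℝ))) i s) := by
    ext ω
    simp only [Set.mem_preimage, Set.mem_pi, Set.mem_univ, true_implies]
    constructor
    · intro h j
      rcases eq_or_ne j i with rfl | hj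
      · simpa using h
      · simp [Function.update_of_ne hj]
    · intro h
      simpa using h i
  rw [h, Measure.pi_pi]
  rw [Finset.prod_eq_single_of_mem i (Finset.mem_univ i)
    (fun j _ hj => by simp [Function.update_of_ne hj])]
  simp

lemma iIndepFun_eval (μ : Measure (ℝ × ℝ)) [IsProbabilityMeasure μ] (n : ℕ) :
    iIndepFun
      (fun i (ω : Fin n → ℝ × ℝ) => ω i) (Measure.pi fun _ => μ) := by
  rw [iIndepFun_iff_measure_inter_preimage_eq_mul]
  intro S sets hsets
  classical
  have h : (⋂ i ∈ S, (fun ω : Fin n → ℝ × ℝ => ω i) ⁻¹' sets i) =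
      Set.pi Set.univ (fun i => if i ∈ S then sets i else Set.univ) := by
    ext ω
    simp only [Set.mem_iInter, Set.mem_preimage, Set.mem_pi, Set.mem_univ, true_implies]
    constructor
    · intro h j
      split_ifs with hj
      · exact h j hj
      · exact Set.mem_univ _
    · intro h j hj
      have := h j
      rwa [if_pos hj] at this
  rw [h, Measure.pi_pi]
  have h2 : ∀ j : Fin n, μ (if j ∈ S then sets j else Set.univ) =
      if j ∈ S then μ (sets j) else 1 := by
    intro j; split_ifs <;> simp
  simp_rw [h2]
  rw [Finset.prod_ite_mem, Finset.univ_inter]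
  exact Finset.prod_congr rfl fun j hj => (pi_eval_measure j (hsets j hj)).symm

lemma log_two_gt : (2:ℝ) / 3 < Real.log 2 := by
  rw [Real.lt_log_iff_exp_lt (by norm_num : (0:ℝ) < 2)]
  have h3 : Real.exp (2/3) ^ 3 = Real.exp 2 := by
    rw [← Real.exp_nat_mul]
    norm_num
  have h2 : Real.exp 2 < 8 := by
    have h1 : Real.exp 2 = Real.exp 1 ^ 2 := by
      rw [← Real.exp_nat_mul]; norm_num
    nlinarith [Real.exp_one_lt_d9, Real.exp_pos 1]
  by_contra hcon
  push_neg at hcon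
  have hcube : (2:ℝ) ^ 3 ≤ Real.exp (2/3) ^ 3 := pow_le_pow_left₀ (by norm_num) hcon 3
  nlinarith

lemma chernoff (μ : Measure (ℝ × ℝ)) [IsProbabilityMeasure μ] (n : ℕ) (S : Set (ℝ × ℝ))
    (hS : MeasurableSet S) :
    (Measure.pi fun _ : Fin n => μ)
      {ω | 2 * n * (μ S).toReal ≤ ∑ i, S.indicator (fun _ => (1:ℝ)) (ω i)} ≤
    ENNReal.ofReal (Real.exp (-((n : ℝ) * (μ S).toReal) / 3)) := by
  classical
  set P := Measure.pi fun _ : Fin n => μ with hP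
  set p := (μ S).toReal with hp
  have hp0 : 0 ≤ p := ENNReal.toReal_nonneg
  set X : Fin n → (Fin n → ℝ × ℝ) → ℝ := fun i ω => S.indicator (fun _ => (1:ℝ)) (ω i) with hX
  have hXm : ∀ i, Measurable (X i) :=
    fun i => (measurable_const.indicator hS).comp (measurable_pi_apply i)
  have h_indep : iIndepFun X P :=
    (iIndepFun_eval μ n).comp (fun _ => S.indicator fun _ => 1)
      (fun _ => measurable_const.indicator hS)
  have hA : ∀ i : Fin n, MeasurableSet ((fun ω : Fin n → ℝ × ℝ => ω i) ⁻¹' S) :=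
    fun i => (measurable_pi_apply i) hS
  have hexp_eq : ∀ (i : Fin n) (t : ℝ), (fun ω => Real.exp (t * X i ω)) =
      fun ω => (Real.exp t - 1) *
        ((fun ω : Fin n → ℝ × ℝ => ω i) ⁻¹' S).indicator (fun _ => (1:ℝ)) ω + 1 := by
    intro i t
    funext ω
    by_cases h : ω i ∈ S
    · simp [hX, Set.indicator_of_mem, h]
    · simp [hX, Set.indicator_of_notMem, h]
  have h_int : ∀ (i : Fin n) (t : ℝ), Integrable (fun ω => Real.exp (t * X i ω)) P := by
    intro i t
    rw [hexp_eq]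
    exact (((integrable_const (1:ℝ)).indicator (hA i)).const_mul _).add (integrable_const 1)
  have h_mgf : ∀ (i : Fin n) (t : ℝ), mgf (X i) P t = 1 + p * (Real.exp t - 1) := by
    intro i t
    rw [mgf, hexp_eq]
    rw [integral_add (((integrable_const (1:ℝ)).indicator (hA i)).const_mul _)
      (integrable_const 1)]
    rw [integral_const_mul _ _, integral_indicator_const _ (hA i), integral_const]
    have : P ((fun ω : Fin n → ℝ × ℝ => ω i) ⁻¹' S) = μ S := pi_eval_measure i hS
    simp only [Measure.real]
    rw [this]
    simp only [smul_eq_mul, measure_univ, ENNReal.toReal_one]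
    ring
  set t := Real.log 2 with ht
  have ht0 : 0 ≤ t := Real.log_nonneg one_le_two
  have h_int_sum : Integrable (fun ω => Real.exp (t * (∑ i, X i) ω)) P :=
    h_indep.integrable_exp_mul_sum hXm (fun i _ => h_int i t)
  have key := measure_ge_le_exp_mul_mgf (X := ∑ i, X i) (μ := P) (2 * n * p) ht0 h_int_sum
  have h_mgf_sum : mgf (∑ i, X i) P t = (1 + p) ^ n := by
    rw [h_indep.mgf_sum hXm]
    simp_rw [h_mgf]
    rw [Finset.prod_const, Finset.card_univ, Fintype.card_fin]
    congr 1
    rw [ht, Real.exp_log (by norm_num : (0:ℝ) < 2)]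
    ring
  have hbound : Real.exp (-t * (2 * n * p)) * mgf (∑ i, X i) P t ≤
      Real.exp (-((n:ℝ) * p) / 3) := by
    rw [h_mgf_sum]
    have h1 : (1 + p) ^ n ≤ Real.exp ((n:ℝ) * p) := by
      calc (1 + p) ^ n ≤ Real.exp p ^ n := by
            apply pow_le_pow_left₀ (by linarith)
            linarith [Real.add_one_le_exp p]
        _ = Real.exp ((n:ℝ) * p) := (Real.exp_nat_mul p n).symm
    calc Real.exp (-t * (2 * n * p)) * (1 + p) ^ n
        ≤ Real.exp (-t * (2 * n * p)) * Real.exp ((n:ℝ) * p) :=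
          mul_le_mul_of_nonneg_left h1 (Real.exp_pos _).le
      _ = Real.exp ((n:ℝ) * p * (1 - 2 * t)) := by rw [← Real.exp_add]; ring_nf
      _ ≤ Real.exp (-((n:ℝ) * p) / 3) := by
          apply Real.exp_le_exp.mpr
          have hnp : 0 ≤ (n:ℝ) * p := by positivity
          nlinarith [log_two_gt]
  have hEvent : {ω : Fin n → ℝ × ℝ | 2 * n * p ≤ ∑ i, S.indicator (fun _ => (1:ℝ)) (ω i)} =
      {ω | 2 * n * p ≤ (∑ i, X i) ω} := by
    ext ω
    simp [hX]
  rw [hEvent]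
  calc P {ω | 2 * n * p ≤ (∑ i, X i) ω}
      = ENNReal.ofReal ((P {ω | 2 * n * p ≤ (∑ i, X i) ω}).toReal) :=
        (ENNReal.ofReal_toReal (measure_ne_top P _)).symm
    _ ≤ ENNReal.ofReal (Real.exp (-((n:ℝ) * p) / 3)) :=
        ENNReal.ofReal_le_ofReal (key.trans hbound)

lemma measurableSet_cutInterval {N : ℕ} (cuts : Fin (N - 1) → ℝ) (i : Fin N) :
    MeasurableSet (cutInterval cuts i) := by
  have h : cutInterval cuts i =
      (⋂ j : Fin (N - 1), {t : ℝ | (j : ℕ) < (i : ℕ) → cuts j ≤ t}) ∩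
      (⋂ j : Fin (N - 1), {t : ℝ | (i : ℕ) ≤ (j : ℕ) → t < cuts j}) := by
    ext t
    simp only [cutInterval, Set.mem_inter_iff, Set.mem_iInter, Set.mem_setOf_eq]
  rw [h]
  apply MeasurableSet.inter <;> refine MeasurableSet.iInter fun j => ?_
  · by_cases hc : (j : ℕ) < (i : ℕ)
    · have : {t : ℝ | (j : ℕ) < (i : ℕ) → cuts j ≤ t} = Set.Ici (cuts j) := by ext; simp [hc]
      rw [this]; exact measurableSet_Ici
    · have : {t : ℝ | (j : ℕ) < (i : ℕ) → cuts j ≤ t} = Set.univ := by ext; simp [hc]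
      rw [this]; exact MeasurableSet.univ
  · by_cases hc : (i : ℕ) ≤ (j : ℕ)
    · have : {t : ℝ | (i : ℕ) ≤ (j : ℕ) → t < cuts j} = Set.Iio (cuts j) := by ext; simp [hc]
      rw [this]; exact measurableSet_Iio
    · have : {t : ℝ | (i : ℕ) ≤ (j : ℕ) → t < cuts j} = Set.univ := by ext; simp [hc]
      rw [this]; exact MeasurableSet.univ

lemma measurableSet_rowRegion {r c : ℕ} (Γ : Grid r c) (i : Fin r) :
    MeasurableSet (rowRegion Γ i) :=
  measurable_snd (measurableSet_cutInterval Γ.rowCuts i)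

lemma measurableSet_colRegion {r c : ℕ} (Γ : Grid r c) (j : Fin c) :
    MeasurableSet (colRegion Γ j) :=
  measurable_fst (measurableSet_cutInterval Γ.colCuts j)

lemma measure_rowRegion (μ : Measure (ℝ × ℝ)) [IsProbabilityMeasure μ] {r c : ℕ} (hc : 0 < c)
    (Γ : Grid r c) (i : Fin r) :
    (μ (rowRegion Γ i)).toReal = ∑ j, gridPMF μ Γ i j := by
  have hcover : rowRegion Γ i = ⋃ j : Fin c, Γ.cell i j := by
    ext p
    simp only [rowRegion, Grid.cell, Set.mem_iUnion, Set.mem_setOf_eq]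
    constructor
    · intro h
      obtain ⟨j, hj⟩ := exists_mem_cutInterval hc Γ.colCuts_mono.monotone p.1
      exact ⟨j, hj, h⟩
    · rintro ⟨j, _, h⟩
      exact h
  have hdisj : Pairwise (Function.onFun Disjoint fun j : Fin c => Γ.cell i j) := by
    intro j j' hne
    rw [Function.onFun, Set.disjoint_left]
    rintro p ⟨h1, _⟩ ⟨h2, _⟩
    exact (Set.disjoint_left.mp (cutInterval_disjoint hne)) h1 h2
  have hmeas : ∀ j : Fin c, MeasurableSet (Γ.cell i j) := fun j =>
    (measurable_fst (measurableSet_cutInterval Γ.colCuts j)).inter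
      (measurable_snd (measurableSet_cutInterval Γ.rowCuts i))
  rw [hcover, measure_iUnion hdisj hmeas, tsum_fintype,
    ENNReal.toReal_sum (fun j _ => measure_ne_top μ _)]
  rfl

lemma measure_colRegion (μ : Measure (ℝ × ℝ)) [IsProbabilityMeasure μ] {r c : ℕ} (hr : 0 < r)
    (Γ : Grid r c) (j : Fin c) :
    (μ (colRegion Γ j)).toReal = ∑ i, gridPMF μ Γ i j := by
  have hcover : colRegion Γ j = ⋃ i : Fin r, Γ.cell i j := by
    ext p
    simp only [colRegion, Grid.cell, Set.mem_iUnion, Set.mem_setOf_eq]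
    constructor
    · intro h
      obtain ⟨i, hi⟩ := exists_mem_cutInterval hr Γ.rowCuts_mono.monotone p.2
      exact ⟨i, h, hi⟩
    · rintro ⟨i, h, _⟩
      exact h
  have hdisj : Pairwise (Function.onFun Disjoint fun i : Fin r => Γ.cell i j) := by
    intro i i' hne
    rw [Function.onFun, Set.disjoint_left]
    rintro p ⟨_, h1⟩ ⟨_, h2⟩
    exact (Set.disjoint_left.mp (cutInterval_disjoint hne)) h1 h2
  have hmeas : ∀ i : Fin r, MeasurableSet (Γ.cell i j) := fun i =>
    (measurable_fst (measurableSet_cutInterval Γ.colCuts j)).inter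
      (measurable_snd (measurableSet_cutInterval Γ.rowCuts i))
  rw [hcover, measure_iUnion hdisj hmeas, tsum_fintype,
    ENNReal.toReal_sum (fun i _ => measure_ne_top μ _)]
  rfl

open Classical in
/-- If the region `S` has `μ`-mass `p`, then the probability that the empirical
measure of `S` exceeds `2 p` is at most `exp (- n p / 3)`. -/
lemma emp_dev_bound (μ : Measure (ℝ × ℝ)) [IsProbabilityMeasure μ] (n : ℕ) (S : Set (ℝ × ℝ))
    (hS : MeasurableSet S) {p : ℝ} (hp : (μ S).toReal = p) (hp0 : 0 < p) :
    (Measure.pi fun _ : Fin n => μ) {ω | ¬ empMeas ω S ≤ 2 * p} ≤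
      ENNReal.ofReal (Real.exp (-((n : ℝ) * p) / 3)) := by
  have hsub : {ω : Fin n → ℝ × ℝ | ¬ empMeas ω S ≤ 2 * p} ⊆
      {ω | 2 * n * (μ S).toReal ≤ ∑ i, S.indicator (fun _ => (1 : ℝ)) (ω i)} := by
    intro ω hω
    rw [Set.mem_setOf_eq, not_le] at hω
    have hsum : ∑ i, S.indicator (fun _ => (1 : ℝ)) (ω i) =
        ((Finset.univ.filter (fun i => ω i ∈ S)).card : ℝ) := by
      simp only [Set.indicator_apply]
      rw [Finset.sum_boole]
    rw [Set.mem_setOf_eq, hsum, hp]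
    rcases Nat.eq_zero_or_pos n with hn | hn
    · exfalso
      subst hn
      rw [empMeas] at hω
      norm_num at hω
      linarith
    · have hn0 : (0 : ℝ) < n := Nat.cast_pos.mpr hn
      rw [empMeas, lt_div_iff₀ hn0] at hω
      linarith
  calc (Measure.pi fun _ : Fin n => μ) {ω | ¬ empMeas ω S ≤ 2 * p}
      ≤ (Measure.pi fun _ : Fin n => μ)
        {ω | 2 * n * (μ S).toReal ≤ ∑ i, S.indicator (fun _ => (1 : ℝ)) (ω i)} :=
        measure_mono hsub
    _ ≤ ENNReal.ofReal (Real.exp (-((n : ℝ) * (μ S).toReal) / 3)) := chernoff μ n S hS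
    _ = ENNReal.ofReal (Real.exp (-((n : ℝ) * p) / 3)) := by rw [hp]

theorem stmt5 (μ : Measure (ℝ × ℝ)) [IsProbabilityMeasure μ]
    (k l m : ℕ) (hk : 2 ≤ k) (hl : 2 ≤ l) (hm : 1 ≤ m)
    (Γ : Grid (k * m) (l * m)) (hΓ : IsEquipartition μ Γ) (n : ℕ) :
    ENNReal.ofReal
        (1 - (l * m : ℝ) * Real.exp (-(n : ℝ) / (3 * (l * m : ℝ)))
           - (k * m : ℝ) * Real.exp (-(n : ℝ) / (3 * (k * m : ℝ)))) ≤
      (Measure.pi fun _ : Fin n => μ)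
        {ω | ∀ G : Grid k l, boundaryMass (empMeas ω) Γ G ≤ 4 / (m : ℝ)} := by
  classical
  set P := Measure.pi fun _ : Fin n => μ with hPdef
  set a : ℝ := (l * m : ℝ) * Real.exp (-(n : ℝ) / (3 * (l * m : ℝ))) with ha
  set b : ℝ := (k * m : ℝ) * Real.exp (-(n : ℝ) / (3 * (k * m : ℝ))) with hb
  have ha0 : 0 ≤ a := by positivity
  have hb0 : 0 ≤ b := by positivity
  have hkm0 : (0 : ℝ) < (k : ℝ) * m := by
    have : (0:ℝ) < (k:ℝ) := Nat.cast_pos.mpr (by omega)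
    have : (0:ℝ) < (m:ℝ) := Nat.cast_pos.mpr (by omega)
    positivity
  have hlm0 : (0 : ℝ) < (l : ℝ) * m := by
    have : (0:ℝ) < (l:ℝ) := Nat.cast_pos.mpr (by omega)
    have : (0:ℝ) < (m:ℝ) := Nat.cast_pos.mpr (by omega)
    positivity
  -- masses of rows and columns
  have hrowP : ∀ i : Fin (k * m), (μ (rowRegion Γ i)).toReal = 1 / ((k : ℝ) * m) := by
    intro i
    rw [measure_rowRegion μ (by positivity) Γ i, hΓ.1 i]
    push_cast
    ring
  have hcolP : ∀ j : Fin (l * m), (μ (colRegion Γ j)).toReal = 1 / ((l : ℝ) * m) := by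
    intro j
    rw [measure_colRegion μ (by positivity) Γ j, hΓ.2 j]
    push_cast
    ring
  -- good event
  set E : Set (Fin n → ℝ × ℝ) :=
    {ω | (∀ i : Fin (k * m), empMeas ω (rowRegion Γ i) ≤ 2 * (1 / ((k : ℝ) * m))) ∧
         (∀ j : Fin (l * m), empMeas ω (colRegion Γ j) ≤ 2 * (1 / ((l : ℝ) * m)))} with hE
  have hsub : E ⊆ {ω | ∀ G : Grid k l, boundaryMass (empMeas ω) Γ G ≤ 4 / (m : ℝ)} := by
    intro ω hω G
    refine boundary_bound hk hl hm Γ ω (fun i => ?_) (fun j => ?_) G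
    · have := hω.1 i
      calc empMeas ω (rowRegion Γ i) ≤ 2 * (1 / ((k : ℝ) * m)) := this
        _ = 2 / ((k : ℝ) * m) := by ring
    · have := hω.2 j
      calc empMeas ω (colRegion Γ j) ≤ 2 * (1 / ((l : ℝ) * m)) := this
        _ = 2 / ((l : ℝ) * m) := by ring
  -- complement bound
  have hcompl : P Eᶜ ≤ ENNReal.ofReal b + ENNReal.ofReal a := by
    have hEc : Eᶜ ⊆
        (⋃ i : Fin (k * m), {ω | ¬ empMeas ω (rowRegion Γ i) ≤ 2 * (1 / ((k : ℝ) * m))}) ∪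
        (⋃ j : Fin (l * m), {ω | ¬ empMeas ω (colRegion Γ j) ≤ 2 * (1 / ((l : ℝ) * m))}) := by
      intro ω hω
      rw [hE, Set.mem_compl_iff, Set.mem_setOf_eq, not_and_or] at hω
      rcases hω with h | h
      · left
        push_neg at h
        obtain ⟨i, hi⟩ := h
        exact Set.mem_iUnion.mpr ⟨i, not_le.mpr hi⟩
      · right
        push_neg at h
        obtain ⟨j, hj⟩ := h
        exact Set.mem_iUnion.mpr ⟨j, not_le.mpr hj⟩
    have hrowBd : ∀ i : Fin (k * m),
        P {ω | ¬ empMeas ω (rowRegion Γ i) ≤ 2 * (1 / ((k : ℝ) * m))} ≤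
        ENNReal.ofReal (Real.exp (-(n : ℝ) / (3 * ((k : ℝ) * m)))) := by
      intro i
      have := emp_dev_bound μ n (rowRegion Γ i) (measurableSet_rowRegion Γ i) (hrowP i)
        (by positivity)
      convert this using 3
      rw [div_eq_div_iff (by positivity) (by norm_num)]
      field_simp
    have hcolBd : ∀ j : Fin (l * m),
        P {ω | ¬ empMeas ω (colRegion Γ j) ≤ 2 * (1 / ((l : ℝ) * m))} ≤
        ENNReal.ofReal (Real.exp (-(n : ℝ) / (3 * ((l : ℝ) * m)))) := by
      intro j
      have := emp_dev_bound μ n (colRegion Γ j) (measurableSet_colRegion Γ j) (hcolP j)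
        (by positivity)
      convert this using 3
      rw [div_eq_div_iff (by positivity) (by norm_num)]
      field_simp
    calc P Eᶜ ≤
        P ((⋃ i : Fin (k * m), {ω | ¬ empMeas ω (rowRegion Γ i) ≤ 2 * (1 / ((k : ℝ) * m))}) ∪
           (⋃ j : Fin (l * m), {ω | ¬ empMeas ω (colRegion Γ j) ≤ 2 * (1 / ((l : ℝ) * m))})) :=
          measure_mono hEc
      _ ≤ P (⋃ i : Fin (k * m), {ω | ¬ empMeas ω (rowRegion Γ i) ≤ 2 * (1 / ((k : ℝ) * m))}) +
          P (⋃ j : Fin (l * m), {ω | ¬ empMeas ω (colRegion Γ j) ≤ 2 * (1 / ((l : ℝ) * m))}) :=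
          measure_union_le _ _
      _ ≤ (∑ i : Fin (k * m), P {ω | ¬ empMeas ω (rowRegion Γ i) ≤ 2 * (1 / ((k : ℝ) * m))}) +
          (∑ j : Fin (l * m), P {ω | ¬ empMeas ω (colRegion Γ j) ≤ 2 * (1 / ((l : ℝ) * m))}) := by
          gcongr
          · exact (measure_iUnion_le _).trans (le_of_eq (tsum_fintype _))
          · exact (measure_iUnion_le _).trans (le_of_eq (tsum_fintype _))
      _ ≤ (∑ _i : Fin (k * m), ENNReal.ofReal (Real.exp (-(n : ℝ) / (3 * ((k : ℝ) * m))))) +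
          (∑ _j : Fin (l * m), ENNReal.ofReal (Real.exp (-(n : ℝ) / (3 * ((l : ℝ) * m))))) := by
          gcongr with i _ j _
          · exact hrowBd i
          · exact hcolBd j
      _ = ENNReal.ofReal b + ENNReal.ofReal a := by
          rw [Finset.sum_const, Finset.sum_const, Finset.card_univ, Finset.card_univ,
            Fintype.card_fin, Fintype.card_fin]
          have hc1 : ((k * m : ℕ) : ENNReal) = ENNReal.ofReal ((k : ℝ) * (m : ℝ)) := by
            rw [← ENNReal.ofReal_natCast]
            congr 1
            push_cast
            ring
          have hc2 : ((l * m : ℕ) : ENNReal) = ENNReal.ofReal ((l : ℝ) * (m : ℝ)) := by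
            rw [← ENNReal.ofReal_natCast]
            congr 1
            push_cast
            ring
          rw [nsmul_eq_mul, nsmul_eq_mul, hc1, hc2, hb, ha,
            ENNReal.ofReal_mul (by positivity), ENNReal.ofReal_mul (by positivity)]
          congr 1 <;>
            rw [← ENNReal.ofReal_mul (by positivity), ← ENNReal.ofReal_mul (by positivity)]
  -- conclude
  by_cases hneg : 1 - a - b ≤ 0
  · rw [show (1 - (l * m : ℝ) * Real.exp (-(n : ℝ) / (3 * (l * m : ℝ)))
           - (k * m : ℝ) * Real.exp (-(n : ℝ) / (3 * (k * m : ℝ)))) = 1 - a - b from rfl]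
    rw [ENNReal.ofReal_eq_zero.mpr hneg]
    exact zero_le
  · push_neg at hneg
    have h2 : P Eᶜ ≤ ENNReal.ofReal (a + b) := by
      calc P Eᶜ ≤ ENNReal.ofReal b + ENNReal.ofReal a := hcompl
        _ = ENNReal.ofReal (a + b) := by rw [← ENNReal.ofReal_add hb0 ha0]; congr 1; ring
    have h3 : ENNReal.ofReal (1 - a - b) + ENNReal.ofReal (a + b) = 1 := by
      rw [← ENNReal.ofReal_add (by linarith) (by linarith)]
      norm_num
    have h4 : (1 : ENNReal) ≤ P E + P Eᶜ := by
      calc (1 : ENNReal) = P Set.univ := (measure_univ).symm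
        _ = P (E ∪ Eᶜ) := by rw [Set.union_compl_self]
        _ ≤ P E + P Eᶜ := measure_union_le _ _
    calc ENNReal.ofReal (1 - a - b) = 1 - ENNReal.ofReal (a + b) := by
          rw [← h3, ENNReal.add_sub_cancel_right ENNReal.ofReal_ne_top]
      _ ≤ 1 - P Eᶜ := tsub_le_tsub_left h2 1
      _ ≤ P E := by
          rw [tsub_le_iff_right]
          exact h4.trans (by rfl)
      _ ≤ P {ω | ∀ G : Grid k l, boundaryMass (empMeas ω) Γ G ≤ 4 / (m : ℝ)} :=
          measure_mono hsub

end
end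

section
/- Let μ be a Borel probability measure on ℝ² and fix real numbers α > 0 and ε > 0. There exist constants C > 0 and N such that: for all n ≥ N, all integers k, ℓ ≥ 2 with k·ℓ ≤ n^α, and any equipartition Γ of μ into k·⌈n^ε⌉ rows and ℓ·⌈n^ε⌉ columns, if D_n is the empirical measure of n iid points drawn from μ, then with probability at least 1 − C·n^{α+2ε−3} one has D_TV(μ|_Γ, D_n|_Γ) ≤ C·n^{α+2ε−1/2}·(log₂ n)^{1/2}. -/
open MeasureTheory Finset

noncomputable section

/-- Total variation distance between two pmfs on `Fin r × Fin c`. -/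
def tvDist {r c : ℕ} (p q : Fin r → Fin c → ℝ) : ℝ :=
  (∑ i, ∑ j, |p i j - q i j|) / 2


section Helpers
open Real

def countRV {n : ℕ} (A : Set (ℝ×ℝ)) (ω : Fin n → ℝ×ℝ) : ℝ := ∑ i, A.indicator 1 (ω i)

lemma countRV_meas {n : ℕ} {A : Set (ℝ×ℝ)} (hA : MeasurableSet A) :
    Measurable (countRV (n := n) A) := by
  apply Finset.measurable_sum
  intro i _
  exact (measurable_one.indicator hA).comp (measurable_pi_apply i)

lemma countRV_nonneg {n : ℕ} (A : Set (ℝ×ℝ)) (ω : Fin n → ℝ×ℝ) : 0 ≤ countRV A ω :=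
  Finset.sum_nonneg fun _ _ => Set.indicator_nonneg (fun _ _ => zero_le_one) _

lemma countRV_le {n : ℕ} (A : Set (ℝ×ℝ)) (ω : Fin n → ℝ×ℝ) : countRV A ω ≤ n := by
  have h : ∀ i ∈ Finset.univ (α := Fin n), A.indicator (1 : ℝ×ℝ → ℝ) (ω i) ≤ 1 := by
    intro i _
    by_cases h : ω i ∈ A <;> simp [h]
  calc countRV A ω ≤ ∑ _i : Fin n, (1:ℝ) := Finset.sum_le_sum h
    _ = n := by simp

lemma empMeas_eq_countRV {n : ℕ} (A : Set (ℝ×ℝ)) (ω : Fin n → ℝ×ℝ) :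
    empMeas ω A = countRV A ω / n := by
  classical
  rw [empMeas, countRV]
  congr 1
  rw [Finset.card_filter]
  push_cast
  apply Finset.sum_congr rfl
  intro i _
  by_cases h : ω i ∈ A <;> simp [h]

lemma integrable_exp_count (μ : Measure (ℝ×ℝ)) [IsProbabilityMeasure μ] (n : ℕ)
    (A : Set (ℝ×ℝ)) (hA : MeasurableSet A) (θ : ℝ) :
    Integrable (fun ω => Real.exp (θ * countRV A ω)) (Measure.pi fun _ : Fin n => μ) := by
  have hm : Measurable fun ω : Fin n → ℝ×ℝ => Real.exp (θ * countRV A ω) :=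
    Real.measurable_exp.comp (measurable_const.mul (countRV_meas hA))
  refine (integrable_const (Real.exp (|θ| * n))).mono' hm.aestronglyMeasurable
    (Filter.Eventually.of_forall fun ω => ?_)
  rw [Real.norm_eq_abs, Real.abs_exp]
  apply Real.exp_le_exp.mpr
  calc θ * countRV A ω ≤ |θ| * countRV A ω :=
        mul_le_mul_of_nonneg_right (le_abs_self θ) (countRV_nonneg A ω)
    _ ≤ |θ| * n := mul_le_mul_of_nonneg_left (countRV_le A ω) (abs_nonneg θ)

lemma mgf_count (μ : Measure (ℝ×ℝ)) [IsProbabilityMeasure μ] (n : ℕ) (A : Set (ℝ×ℝ))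
    (hA : MeasurableSet A) (θ : ℝ) :
    ProbabilityTheory.mgf (countRV A) (Measure.pi fun _ : Fin n => μ) θ
      = (1 + (μ A).toReal * (Real.exp θ - 1)) ^ n := by
  rw [ProbabilityTheory.mgf]
  letI : MeasureSpace (ℝ×ℝ) := ⟨μ⟩
  have hpi : (Measure.pi fun _ : Fin n => μ) = (volume : Measure (Fin n → ℝ×ℝ)) := by
    rw [volume_pi]; rfl
  have h1 : ∀ ω : Fin n → ℝ×ℝ, Real.exp (θ * countRV A ω)
      = ∏ i, (fun x => Real.exp (θ * A.indicator 1 x)) (ω i) := by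
    intro ω
    rw [countRV, Finset.mul_sum, Real.exp_sum]
  rw [hpi]
  show ∫ ω, Real.exp (θ * countRV A ω) = _
  simp_rw [h1]
  rw [MeasureTheory.integral_fintype_prod_volume_eq_pow (ι := Fin n) (fun x => Real.exp (θ * A.indicator 1 x))]
  rw [Fintype.card_fin]
  congr 1
  have h2 : ∀ x : ℝ×ℝ, Real.exp (θ * A.indicator 1 x)
      = A.indicator (fun _ => Real.exp θ - 1) x + 1 := by
    intro x
    by_cases hx : x ∈ A <;> simp [hx]
  simp_rw [h2]
  rw [integral_add ((integrable_const _).indicator hA) (integrable_const 1)]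
  rw [integral_indicator_const _ hA, integral_const]
  have hv : (volume : Measure (ℝ×ℝ)) = μ := rfl
  rw [hv]
  simp [measureReal_def]
  ring

lemma exp_quad {x : ℝ} (hx : |x| ≤ 1) : Real.exp x ≤ 1 + x + x^2 := by
  have h := Real.exp_bound hx (by norm_num : 0 < 2)
  simp only [Finset.sum_range_succ, Finset.sum_range_zero] at h
  norm_num at h
  have h2 := (abs_le.mp h).2
  have hx2 : |x|^2 = x^2 := sq_abs x
  nlinarith [sq_nonneg x]

lemma quad_exponent (n : ℕ) (p t L : ℝ) (hppos : 0 < p) (hp : p ≤ 1/4) (hL : 0 < L)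
    (hn : 0 < (n:ℝ)) (ht2 : t^2 = 4*L/n) :
    (n:ℝ) * (p * (t/(2*p))^2 - (t/(2*p)) * t) ≤ -(3*L) := by
  have h1 : (n:ℝ) * (p * (t/(2*p))^2 - (t/(2*p)) * t) = -((n:ℝ)*t^2/(4*p)) := by
    field_simp
    ring
  rw [h1, ht2]
  have h2 : (n:ℝ)*(4*L/n)/(4*p) = L/p := by field_simp
  rw [h2, neg_le_neg_iff, le_div_iff₀ hppos]
  nlinarith

set_option maxHeartbeats 1000000 in
lemma cell_bound (μ : Measure (ℝ×ℝ)) [IsProbabilityMeasure μ] (n : ℕ) (A : Set (ℝ×ℝ))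
    (hA : MeasurableSet A) (hL : 1 ≤ Real.log n) (hn9 : 9 * Real.log n ≤ (n:ℝ))
    (hp14 : (μ A).toReal ≤ 1/4) :
    (Measure.pi fun _ : Fin n => μ)
      {ω | 2 * Real.sqrt (Real.log n / n) ≤ |(μ A).toReal - empMeas ω A|}
      ≤ ENNReal.ofReal (2 * Real.exp (-(3 * Real.log n))) := by
  set PP := Measure.pi fun _ : Fin n => μ with hPPdef
  set p := (μ A).toReal with hpdef
  set L := Real.log n with hLdef
  set t := 2 * Real.sqrt (L / n) with htdef
  have hp0 : 0 ≤ p := ENNReal.toReal_nonneg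
  have hn1 : (1:ℝ) < n := by
    by_contra h
    push_neg at h
    have := Real.log_nonpos (by positivity) h
    rw [← hLdef] at this
    linarith
  have hnpos : (0:ℝ) < n := by linarith
  have hLpos : (0:ℝ) < L := by linarith
  have htpos : 0 < t := by
    rw [htdef]
    positivity
  have ht2 : t^2 = 4 * L / n := by
    rw [htdef, mul_pow, Real.sq_sqrt (by positivity)]
    ring
  have hsub : {ω : Fin n → ℝ×ℝ | t ≤ |p - empMeas ω A|}
      ⊆ {ω | (n:ℝ)*(p+t) ≤ countRV A ω} ∪ {ω | countRV A ω ≤ (n:ℝ)*(p-t)} := by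
    intro ω hω
    simp only [Set.mem_setOf_eq, Set.mem_union]
    rw [Set.mem_setOf_eq, empMeas_eq_countRV] at hω
    rcases abs_cases (p - countRV A ω / n) with ⟨h1, _⟩ | ⟨h1, _⟩
    · right
      rw [h1] at hω
      have h2 : countRV A ω / n ≤ p - t := by linarith
      have h3 := (div_le_iff₀ hnpos).mp h2
      linarith [h3]
    · left
      rw [h1] at hω
      have h2 : p + t ≤ countRV A ω / n := by linarith
      have h3 := (le_div_iff₀ hnpos).mp h2
      linarith [h3]
  refine le_trans (measure_mono hsub) (le_trans (measure_union_le _ _) ?_)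
  have hexp0 : (0:ℝ) ≤ Real.exp (-(3*L)) := (Real.exp_pos _).le
  -- upper tail
  have hbound1 : PP {ω | (n:ℝ)*(p+t) ≤ countRV A ω} ≤ ENNReal.ofReal (Real.exp (-(3*L))) := by
    rw [ENNReal.le_ofReal_iff_toReal_le (measure_ne_top _ _) hexp0]
    by_cases hc : t ≤ 2*p
    · -- θ = t/(2p)
      have hppos : 0 < p := by linarith
      set θ := t/(2*p) with hθdef
      have hθpos : 0 < θ := by positivity
      have hθ1 : θ ≤ 1 := by
        rw [hθdef, div_le_one (by positivity)]
        linarith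
      have h := ProbabilityTheory.measure_ge_le_exp_mul_mgf (X := countRV A) (μ := PP)
        ((n:ℝ)*(p+t)) hθpos.le (integrable_exp_count μ n A hA θ)
      rw [mgf_count μ n A hA θ, ← hpdef] at h
      refine h.trans ?_
      have hstep1 : 1 + p * (Real.exp θ - 1) ≤ Real.exp (p * (θ + θ^2)) := by
        have he : Real.exp θ ≤ 1 + θ + θ^2 := exp_quad (by rw [abs_of_pos hθpos]; exact hθ1)
        have h2 : p * (Real.exp θ - 1) ≤ p * (θ + θ^2) := by nlinarith
        linarith [Real.add_one_le_exp (p * (θ + θ^2))]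
      have hge0 : (0:ℝ) ≤ 1 + p * (Real.exp θ - 1) := by
        have : (1:ℝ) ≤ Real.exp θ := Real.one_le_exp hθpos.le
        nlinarith
      calc Real.exp (-θ * ((n:ℝ)*(p+t))) * (1 + p * (Real.exp θ - 1)) ^ n
          ≤ Real.exp (-θ * ((n:ℝ)*(p+t))) * (Real.exp (p * (θ + θ^2))) ^ n := by
            apply mul_le_mul_of_nonneg_left _ (Real.exp_pos _).le
            exact pow_le_pow_left₀ hge0 hstep1 n
        _ = Real.exp (-θ * ((n:ℝ)*(p+t)) + (n:ℝ) * (p * (θ + θ^2))) := by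
            rw [← Real.exp_nat_mul, ← Real.exp_add]
        _ ≤ Real.exp (-(3*L)) := by
            apply Real.exp_le_exp.mpr
            have heq : -θ * ((n:ℝ)*(p+t)) + (n:ℝ) * (p * (θ + θ^2))
                = (n:ℝ) * (p * θ^2 - θ * t) := by ring
            rw [heq, hθdef]
            exact quad_exponent n p t L hppos hp14 hLpos hnpos ht2
    · -- θ = 1
      push_neg at hc
      have h := ProbabilityTheory.measure_ge_le_exp_mul_mgf (X := countRV A) (μ := PP)
        ((n:ℝ)*(p+t)) zero_le_one (integrable_exp_count μ n A hA 1)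
      rw [mgf_count μ n A hA 1, ← hpdef] at h
      refine h.trans ?_
      have hstep1 : 1 + p * (Real.exp 1 - 1) ≤ Real.exp (p * (Real.exp 1 - 1)) := by
        linarith [Real.add_one_le_exp (p * (Real.exp 1 - 1))]
      have hge0 : (0:ℝ) ≤ 1 + p * (Real.exp 1 - 1) := by
        have : (1:ℝ) ≤ Real.exp 1 := Real.one_le_exp zero_le_one
        nlinarith
      have hE : Real.exp 1 ≤ 3 := by
        have := Real.exp_one_lt_d9
        linarith
      have h32 : 3 * L ≤ (n:ℝ) * t / 2 := by
        have hsq : (n:ℝ) * t / 2 = Real.sqrt ((n:ℝ) * L) := by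
          rw [htdef]
          rw [show (n:ℝ) * (2 * Real.sqrt (L / (n:ℝ))) / 2 = (n:ℝ) * Real.sqrt (L / n) by ring]
          rw [show (n:ℝ) * Real.sqrt (L / (n:ℝ))
              = Real.sqrt (((n:ℝ))^2) * Real.sqrt (L / n) by rw [Real.sqrt_sq hnpos.le]]
          rw [← Real.sqrt_mul (by positivity)]
          congr 1
          field_simp
        rw [hsq]
        rw [show (3:ℝ) * L = Real.sqrt ((3*L)^2) by rw [Real.sqrt_sq (by positivity)]]
        apply Real.sqrt_le_sqrt
        nlinarith
      calc Real.exp (-1 * ((n:ℝ)*(p+t))) * (1 + p * (Real.exp 1 - 1)) ^ n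
          ≤ Real.exp (-1 * ((n:ℝ)*(p+t))) * (Real.exp (p * (Real.exp 1 - 1))) ^ n := by
            apply mul_le_mul_of_nonneg_left _ (Real.exp_pos _).le
            exact pow_le_pow_left₀ hge0 hstep1 n
        _ = Real.exp (-1 * ((n:ℝ)*(p+t)) + (n:ℝ) * (p * (Real.exp 1 - 1))) := by
            rw [← Real.exp_nat_mul, ← Real.exp_add]
        _ ≤ Real.exp (-(3*L)) := by
            apply Real.exp_le_exp.mpr
            have h1 : -1 * ((n:ℝ)*(p+t)) + (n:ℝ) * (p * (Real.exp 1 - 1))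
                = (n:ℝ) * (p * (Real.exp 1 - 2) - t) := by ring
            rw [h1]
            have h2 : p * (Real.exp 1 - 2) ≤ p := by nlinarith [hp0, hE]
            have h3 : (n:ℝ) * (p * (Real.exp 1 - 2) - t) ≤ (n:ℝ) * (-t/2) := by
              apply mul_le_mul_of_nonneg_left _ hnpos.le
              nlinarith
            have h4 : (n:ℝ) * (-t/2) ≤ -(3*L) := by linarith
            linarith
  -- lower tail
  have hbound2 : PP {ω | countRV A ω ≤ (n:ℝ)*(p-t)} ≤ ENNReal.ofReal (Real.exp (-(3*L))) := by
    by_cases hlow : p < t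
    · have hempty : {ω : Fin n → ℝ×ℝ | countRV A ω ≤ (n:ℝ)*(p-t)} = ∅ := by
        rw [Set.eq_empty_iff_forall_notMem]
        intro ω hω
        rw [Set.mem_setOf_eq] at hω
        have := countRV_nonneg A ω
        nlinarith
      rw [hempty]
      simp
    · push_neg at hlow
      have hppos : 0 < p := by linarith
      set θ := t/(2*p) with hθdef
      have hθpos : 0 < θ := by positivity
      have hθ1 : θ ≤ 1 := by
        rw [hθdef, div_le_one (by positivity)]
        linarith
      rw [ENNReal.le_ofReal_iff_toReal_le (measure_ne_top _ _) hexp0]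
      have h := ProbabilityTheory.measure_le_le_exp_mul_mgf (X := countRV A) (μ := PP)
        ((n:ℝ)*(p-t)) (neg_nonpos.mpr hθpos.le) (integrable_exp_count μ n A hA (-θ))
      rw [mgf_count μ n A hA (-θ), ← hpdef] at h
      refine h.trans ?_
      have hstep1 : 1 + p * (Real.exp (-θ) - 1) ≤ Real.exp (p * (-θ + θ^2)) := by
        have he : Real.exp (-θ) ≤ 1 + (-θ) + (-θ)^2 := exp_quad (by
          rw [abs_neg, abs_of_pos hθpos]; exact hθ1)
        have h2 : p * (Real.exp (-θ) - 1) ≤ p * (-θ + θ^2) := by nlinarith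
        linarith [Real.add_one_le_exp (p * (-θ + θ^2))]
      have hge0 : (0:ℝ) ≤ 1 + p * (Real.exp (-θ) - 1) := by
        have h1 : (0:ℝ) < Real.exp (-θ) := Real.exp_pos _
        nlinarith
      calc Real.exp (-(-θ) * ((n:ℝ)*(p-t))) * (1 + p * (Real.exp (-θ) - 1)) ^ n
          ≤ Real.exp (θ * ((n:ℝ)*(p-t))) * (Real.exp (p * (-θ + θ^2))) ^ n := by
            rw [neg_neg]
            apply mul_le_mul_of_nonneg_left _ (Real.exp_pos _).le
            exact pow_le_pow_left₀ hge0 hstep1 n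
        _ = Real.exp (θ * ((n:ℝ)*(p-t)) + (n:ℝ) * (p * (-θ + θ^2))) := by
            rw [← Real.exp_nat_mul, ← Real.exp_add]
        _ ≤ Real.exp (-(3*L)) := by
            apply Real.exp_le_exp.mpr
            have heq : θ * ((n:ℝ)*(p-t)) + (n:ℝ) * (p * (-θ + θ^2))
                = (n:ℝ) * (p * θ^2 - θ * t) := by ring
            rw [heq, hθdef]
            exact quad_exponent n p t L hppos hp14 hLpos hnpos ht2
  calc PP {ω | (n:ℝ)*(p+t) ≤ countRV A ω} + PP {ω | countRV A ω ≤ (n:ℝ)*(p-t)}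
      ≤ ENNReal.ofReal (Real.exp (-(3*L))) + ENNReal.ofReal (Real.exp (-(3*L))) :=
        add_le_add hbound1 hbound2
    _ = ENNReal.ofReal (2 * Real.exp (-(3*L))) := by
        rw [← ENNReal.ofReal_add hexp0 hexp0]
        ring_nf

lemma measurable_cutInterval {m : ℕ} (cuts : Fin (m-1) → ℝ) (i : Fin m) :
    MeasurableSet (cutInterval cuts i) := by
  have heq : cutInterval cuts i =
      (⋂ j : Fin (m-1), {t : ℝ | (j:ℕ) < (i:ℕ) → cuts j ≤ t}) ∩
      (⋂ j : Fin (m-1), {t : ℝ | (i:ℕ) ≤ (j:ℕ) → t < cuts j}) := by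
    ext x
    simp [cutInterval, Set.mem_iInter, Set.mem_setOf_eq]
  rw [heq]
  apply MeasurableSet.inter
  · apply MeasurableSet.iInter
    intro j
    by_cases h : (j:ℕ) < (i:ℕ)
    · have : {t : ℝ | (j:ℕ) < (i:ℕ) → cuts j ≤ t} = Set.Ici (cuts j) := by
        ext x; simp [h]
      rw [this]; exact measurableSet_Ici
    · have : {t : ℝ | (j:ℕ) < (i:ℕ) → cuts j ≤ t} = Set.univ := by
        ext x; simp [h]
      rw [this]; exact MeasurableSet.univ
  · apply MeasurableSet.iInter
    intro j
    by_cases h : (i:ℕ) ≤ (j:ℕ)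
    · have : {t : ℝ | (i:ℕ) ≤ (j:ℕ) → t < cuts j} = Set.Iio (cuts j) := by
        ext x; simp [h]
      rw [this]; exact measurableSet_Iio
    · have : {t : ℝ | (i:ℕ) ≤ (j:ℕ) → t < cuts j} = Set.univ := by
        ext x; simp [h]
      rw [this]; exact MeasurableSet.univ

lemma measurable_cell {r c : ℕ} (G : Grid r c) (i : Fin r) (j : Fin c) :
    MeasurableSet (G.cell i j) := by
  have heq : G.cell i j = (Prod.fst ⁻¹' cutInterval G.colCuts j) ∩
      (Prod.snd ⁻¹' cutInterval G.rowCuts i) := by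
    rfl
  rw [heq]
  exact (measurable_fst (measurable_cutInterval _ _)).inter
    (measurable_snd (measurable_cutInterval _ _))

end Helpers

set_option maxHeartbeats 1000000 in
theorem stmt7 (μ : Measure (ℝ × ℝ)) [IsProbabilityMeasure μ]
    (α ε : ℝ) (hα : 0 < α) (hε : 0 < ε) :
    ∃ C > (0 : ℝ), ∃ N : ℕ, ∀ n : ℕ, N ≤ n →
      ∀ k l : ℕ, 2 ≤ k → 2 ≤ l → ((k * l : ℕ) : ℝ) ≤ (n : ℝ) ^ α →
        ∀ Γ : Grid (k * ⌈(n : ℝ) ^ ε⌉₊) (l * ⌈(n : ℝ) ^ ε⌉₊), IsEquipartition μ Γ →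
          ENNReal.ofReal (1 - C * (n : ℝ) ^ (α + 2 * ε - 3)) ≤
            (Measure.pi fun _ : Fin n => μ)
              {ω | tvDist (gridPMF μ Γ) (empGridPMF ω Γ) ≤
                C * (n : ℝ) ^ (α + 2 * ε - 1 / 2) * Real.sqrt (Real.logb 2 n)} := by
  have hev : ∃ N₁ : ℕ, ∀ n' : ℕ, N₁ ≤ n' → (2:ℝ) ≤ (n':ℝ)^ε := by
    have h1 : Filter.Tendsto (fun n' : ℕ => ((n':ℝ))^ε) Filter.atTop Filter.atTop :=
      (tendsto_rpow_atTop hε).comp tendsto_natCast_atTop_atTop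
    exact Filter.eventually_atTop.mp (h1.eventually_ge_atTop 2)
  obtain ⟨N₁, hN₁⟩ := hev
  refine ⟨8, by norm_num, max N₁ 324, ?_⟩
  intro n hn k l hk hl hkl Γ hΓ
  have hnN1 : N₁ ≤ n := le_trans (le_max_left _ _) hn
  have hn324 : 324 ≤ n := le_trans (le_max_right _ _) hn
  have hn324R : (324:ℝ) ≤ n := by exact_mod_cast hn324
  have hnpos : (0:ℝ) < n := by linarith
  set L := Real.log n with hLdef
  have hL1 : 1 ≤ L := by
    rw [hLdef, show (1:ℝ) = Real.log (Real.exp 1) by rw [Real.log_exp]]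
    apply Real.log_le_log (Real.exp_pos 1)
    have := Real.exp_one_lt_d9
    linarith
  have hLpos : (0:ℝ) < L := by linarith
  have hn9 : 9 * L ≤ (n:ℝ) := by
    have hsqrt_pos : (0:ℝ) < Real.sqrt n := Real.sqrt_pos.mpr hnpos
    have h18 : (18:ℝ) ≤ Real.sqrt n := by
      rw [show (18:ℝ) = Real.sqrt 324 by
        rw [show (324:ℝ) = 18^2 by norm_num, Real.sqrt_sq (by norm_num)]]
      exact Real.sqrt_le_sqrt hn324R
    have hlog2 : L = 2 * Real.log (Real.sqrt n) := by
      rw [hLdef, Real.log_sqrt hnpos.le]; ring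
    have hls := Real.log_le_sub_one_of_pos hsqrt_pos
    have hsq : Real.sqrt n * Real.sqrt n = (n:ℝ) := Real.mul_self_sqrt hnpos.le
    nlinarith
  have hne : (2:ℝ) ≤ (n:ℝ)^ε := hN₁ n hnN1
  have hm2 : (2:ℝ) ≤ (⌈(n:ℝ)^ε⌉₊:ℝ) := le_trans hne (Nat.le_ceil _)
  have hmub : (⌈(n:ℝ)^ε⌉₊:ℝ) ≤ 2 * (n:ℝ)^ε := by
    have h1 := Nat.ceil_lt_add_one (by positivity : (0:ℝ) ≤ (n:ℝ)^ε)
    linarith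
  set PP := Measure.pi fun _ : Fin n => μ with hPPdef
  set t := 2 * Real.sqrt (L / n) with htdef
  have htpos : 0 < t := by rw [htdef]; positivity
  have hkR : (2:ℝ) ≤ (k:ℝ) := by exact_mod_cast hk
  have hlR : (2:ℝ) ≤ (l:ℝ) := by exact_mod_cast hl
  have hR4 : (4:ℝ) ≤ ((k*⌈(n:ℝ)^ε⌉₊ : ℕ):ℝ) := by push_cast; nlinarith
  have hp14 : ∀ (i : Fin (k*⌈(n:ℝ)^ε⌉₊)) (j : Fin (l*⌈(n:ℝ)^ε⌉₊)), (μ (Γ.cell i j)).toReal ≤ 1/4 := by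
    intro i j
    have hrow := hΓ.1 i
    have hsingle : gridPMF μ Γ i j ≤ ∑ j', gridPMF μ Γ i j' :=
      Finset.single_le_sum (f := fun j' => gridPMF μ Γ i j') (fun j' _ => ENNReal.toReal_nonneg) (Finset.mem_univ j)
    rw [hrow] at hsingle
    have h2 : (1:ℝ)/((k*⌈(n:ℝ)^ε⌉₊:ℕ):ℝ) ≤ 1/4 :=
      one_div_le_one_div_of_le (by norm_num) hR4
    exact le_trans hsingle h2
  set Bad := ⋃ i : Fin (k*⌈(n:ℝ)^ε⌉₊), ⋃ j : Fin (l*⌈(n:ℝ)^ε⌉₊),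
    {ω : Fin n → ℝ×ℝ | t ≤ |gridPMF μ Γ i j - empGridPMF ω Γ i j|} with hBaddef
  have hBijMeas : ∀ (i : Fin (k*⌈(n:ℝ)^ε⌉₊)) (j : Fin (l*⌈(n:ℝ)^ε⌉₊)),
      MeasurableSet {ω : Fin n → ℝ×ℝ | t ≤ |gridPMF μ Γ i j - empGridPMF ω Γ i j|} := by
    intro i j
    apply measurableSet_le measurable_const
    have hfun : (fun ω : Fin n → ℝ×ℝ => |gridPMF μ Γ i j - empGridPMF ω Γ i j|)
        = fun ω => |gridPMF μ Γ i j - countRV (Γ.cell i j) ω / n| := by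
      funext ω; rw [empGridPMF, empMeas_eq_countRV]
    rw [hfun]
    exact (measurable_const.sub ((countRV_meas (measurable_cell Γ i j)).div_const n)).abs
  have hBadMeas : MeasurableSet Bad :=
    MeasurableSet.iUnion fun i => MeasurableSet.iUnion fun j => hBijMeas i j
  have hcellbound : ∀ (i : Fin (k*⌈(n:ℝ)^ε⌉₊)) (j : Fin (l*⌈(n:ℝ)^ε⌉₊)),
      PP {ω : Fin n → ℝ×ℝ | t ≤ |gridPMF μ Γ i j - empGridPMF ω Γ i j|}
        ≤ ENNReal.ofReal (2 * Real.exp (-(3*L))) := by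
    intro i j
    exact cell_bound μ n (Γ.cell i j) (measurable_cell Γ i j) hL1 hn9 (hp14 i j)
  have hBadBound : PP Bad
      ≤ ENNReal.ofReal ((((k*⌈(n:ℝ)^ε⌉₊)*(l*⌈(n:ℝ)^ε⌉₊) : ℕ):ℝ) * (2 * Real.exp (-(3*L)))) := by
    have h1 : PP Bad ≤ ∑ i : Fin (k*⌈(n:ℝ)^ε⌉₊), ∑ j : Fin (l*⌈(n:ℝ)^ε⌉₊),
        PP {ω : Fin n → ℝ×ℝ | t ≤ |gridPMF μ Γ i j - empGridPMF ω Γ i j|} := by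
      refine le_trans (measure_iUnion_le _) ?_
      rw [tsum_fintype]
      apply Finset.sum_le_sum
      intro i _
      refine le_trans (measure_iUnion_le _) ?_
      rw [tsum_fintype]
    refine h1.trans ?_
    have h2 : ∑ i : Fin (k*⌈(n:ℝ)^ε⌉₊), ∑ j : Fin (l*⌈(n:ℝ)^ε⌉₊),
        PP {ω : Fin n → ℝ×ℝ | t ≤ |gridPMF μ Γ i j - empGridPMF ω Γ i j|}
        ≤ ∑ _i : Fin (k*⌈(n:ℝ)^ε⌉₊), ∑ _j : Fin (l*⌈(n:ℝ)^ε⌉₊), ENNReal.ofReal (2 * Real.exp (-(3*L))) :=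
      Finset.sum_le_sum fun i _ => Finset.sum_le_sum fun j _ => hcellbound i j
    refine h2.trans ?_
    simp only [Finset.sum_const, Finset.card_univ, Fintype.card_fin, smul_smul, nsmul_eq_mul]
    apply le_of_eq
    conv_rhs => rw [ENNReal.ofReal_mul (by positivity), ENNReal.ofReal_natCast, Nat.cast_mul]
    ring
  have hRS : (((k*⌈(n:ℝ)^ε⌉₊)*(l*⌈(n:ℝ)^ε⌉₊) : ℕ):ℝ) ≤ 4 * (n:ℝ)^(α+2*ε) := by
    have h1 : ((k:ℝ)*l) ≤ (n:ℝ)^α := by push_cast at hkl ⊢; linarith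
    have hm0 : (0:ℝ) ≤ (⌈(n:ℝ)^ε⌉₊:ℝ) := by positivity
    have hsq2 : ((n:ℝ)^ε)^2 = (n:ℝ)^(2*ε) := by
      rw [← Real.rpow_natCast ((n:ℝ)^ε) 2, ← Real.rpow_mul hnpos.le]
      congr 1
      push_cast
      ring
    have hrw : (n:ℝ)^(α+2*ε) = (n:ℝ)^α * ((n:ℝ)^ε)^2 := by
      rw [hsq2, ← Real.rpow_add hnpos]
    push_cast
    rw [hrw]
    calc (k:ℝ)*⌈(n:ℝ)^ε⌉₊*((l:ℝ)*⌈(n:ℝ)^ε⌉₊) = ((k:ℝ)*l) * (⌈(n:ℝ)^ε⌉₊:ℝ)^2 := by ring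
      _ ≤ (n:ℝ)^α * (2*(n:ℝ)^ε)^2 := by
          apply mul_le_mul h1 _ (by positivity) (by positivity)
          exact pow_le_pow_left₀ hm0 hmub 2
      _ = 4 * ((n:ℝ)^α * ((n:ℝ)^ε)^2) := by ring
  have hexp3 : Real.exp (-(3*L)) = (n:ℝ)^(-(3:ℝ)) := by
    rw [Real.rpow_def_of_pos hnpos]
    congr 1
    rw [hLdef]; ring
  have hfinal1 : (((k*⌈(n:ℝ)^ε⌉₊)*(l*⌈(n:ℝ)^ε⌉₊):ℕ):ℝ) * (2*Real.exp (-(3*L))) ≤ 8 * (n:ℝ)^(α+2*ε-3) := by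
    have h2 : (n:ℝ)^(α+2*ε-3) = (n:ℝ)^(α+2*ε) * (n:ℝ)^(-(3:ℝ)) := by
      rw [← Real.rpow_add hnpos]; ring_nf
    rw [hexp3, h2]
    have hx : (0:ℝ) < (n:ℝ)^(-(3:ℝ)) := by positivity
    calc (((k*⌈(n:ℝ)^ε⌉₊)*(l*⌈(n:ℝ)^ε⌉₊):ℕ):ℝ) * (2*(n:ℝ)^(-(3:ℝ)))
        ≤ (4 * (n:ℝ)^(α+2*ε)) * (2*(n:ℝ)^(-(3:ℝ))) := by
          apply mul_le_mul_of_nonneg_right hRS (by positivity)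
      _ = 8 * ((n:ℝ)^(α+2*ε) * (n:ℝ)^(-(3:ℝ))) := by ring
  have hgood : Badᶜ ⊆ {ω : Fin n → ℝ×ℝ | tvDist (gridPMF μ Γ) (empGridPMF ω Γ) ≤
      8 * (n:ℝ)^(α+2*ε-1/2) * Real.sqrt (Real.logb 2 n)} := by
    intro ω hω
    simp only [hBaddef, Set.compl_iUnion, Set.mem_iInter, Set.mem_compl_iff,
      Set.mem_setOf_eq] at hω
    rw [Set.mem_setOf_eq, tvDist]
    have hsum : ∑ i, ∑ j, |gridPMF μ Γ i j - empGridPMF ω Γ i j|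
        ≤ (((k*⌈(n:ℝ)^ε⌉₊)*(l*⌈(n:ℝ)^ε⌉₊):ℕ):ℝ) * t := by
      calc ∑ i, ∑ j, |gridPMF μ Γ i j - empGridPMF ω Γ i j|
          ≤ ∑ _i : Fin (k*⌈(n:ℝ)^ε⌉₊), ∑ _j : Fin (l*⌈(n:ℝ)^ε⌉₊), t :=
            Finset.sum_le_sum fun i _ => Finset.sum_le_sum fun j _ =>
              (not_le.mp (hω i j)).le
        _ = (((k*⌈(n:ℝ)^ε⌉₊)*(l*⌈(n:ℝ)^ε⌉₊):ℕ):ℝ) * t := by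
            simp [Finset.sum_const, Finset.card_univ]
            push_cast
            ring
    have htv : (∑ i, ∑ j, |gridPMF μ Γ i j - empGridPMF ω Γ i j|)/2
        ≤ (((k*⌈(n:ℝ)^ε⌉₊)*(l*⌈(n:ℝ)^ε⌉₊):ℕ):ℝ) * t / 2 := by linarith
    refine le_trans htv ?_
    have hstep : (((k*⌈(n:ℝ)^ε⌉₊)*(l*⌈(n:ℝ)^ε⌉₊):ℕ):ℝ) * t / 2 ≤ (4*(n:ℝ)^(α+2*ε)) * t / 2 := by
      have := mul_le_mul_of_nonneg_right hRS htpos.le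
      linarith
    refine le_trans hstep ?_
    have hsqrtdiv : Real.sqrt (L/(n:ℝ)) = Real.sqrt L / Real.sqrt n := Real.sqrt_div hLpos.le _
    have hsn : Real.sqrt ((n:ℝ)) = (n:ℝ)^((1:ℝ)/2) := Real.sqrt_eq_rpow _
    have hLlogb : Real.sqrt L ≤ Real.sqrt (Real.logb 2 (n:ℝ)) := by
      apply Real.sqrt_le_sqrt
      rw [Real.logb, ← hLdef, le_div_iff₀ (Real.log_pos one_lt_two)]
      nlinarith [Real.log_two_lt_d9, hLpos]
    have hrw2 : (n:ℝ)^(α+2*ε-1/2) = (n:ℝ)^(α+2*ε) / (n:ℝ)^((1:ℝ)/2) := by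
      rw [← Real.rpow_sub hnpos]
    calc (4*(n:ℝ)^(α+2*ε)) * t / 2
        = 4 * ((n:ℝ)^(α+2*ε) / (n:ℝ)^((1:ℝ)/2)) * Real.sqrt L := by
          rw [htdef, hsqrtdiv, hsn]; ring
      _ ≤ 4 * ((n:ℝ)^(α+2*ε) / (n:ℝ)^((1:ℝ)/2)) * Real.sqrt (Real.logb 2 (n:ℝ)) := by
          apply mul_le_mul_of_nonneg_left hLlogb (by positivity)
      _ ≤ 8 * (n:ℝ)^(α+2*ε-1/2) * Real.sqrt (Real.logb 2 (n:ℝ)) := by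
          rw [hrw2]
          have h8 : (0:ℝ) ≤ ((n:ℝ)^(α+2*ε) / (n:ℝ)^((1:ℝ)/2)) * Real.sqrt (Real.logb 2 (n:ℝ)) := by
            positivity
          nlinarith
  calc ENNReal.ofReal (1 - 8 * (n:ℝ)^(α+2*ε-3))
      = 1 - ENNReal.ofReal (8 * (n:ℝ)^(α+2*ε-3)) := by
        rw [ENNReal.ofReal_sub _ (by positivity), ENNReal.ofReal_one]
    _ ≤ 1 - PP Bad :=
        tsub_le_tsub_left (hBadBound.trans (ENNReal.ofReal_le_ofReal hfinal1)) 1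
    _ = PP Badᶜ := (prob_compl_eq_one_sub hBadMeas).symm
    _ ≤ PP {ω : Fin n → ℝ×ℝ | tvDist (gridPMF μ Γ) (empGridPMF ω Γ) ≤
        8 * (n:ℝ)^(α+2*ε-1/2) * Real.sqrt (Real.logb 2 n)} := measure_mono hgood


end
end
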